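/- If a string w contains a character x exactly once, w = v x v', and the sets of characters of v and v' are disjoint and both avoid x, and both v and v' are uniquely decodable, then w is uniquely decodable. -/

import Mathlib

/-- The multiset of bigrams (length-2 contiguous substrings) of a list. -/
def bigrams {β : Type*} (l : List β) : Multiset (β × β) :=
  (l.zip l.tail : List (β × β))

/-- The delimited form `$w$` of a string `w` over `α`, with `none` as the delimiter. -/
def delim {α : Type*} (w : List α) : List (Option α) :=
  none :: (w.map some ++ [none])

/-- The bigram encoding of a string: the multiset of bigrams of its delimited form. -/
def Phi {α : Type*} (w : List α) : Multiset (Option α × Option α) :=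
  bigrams (delim w)

/-- A string is uniquely decodable if it is the only string with its bigram encoding. -/
def UD {α : Type*} (w : List α) : Prop :=
  ∀ w' : List α, Phi w' = Phi w → w' = w

lemma bigrams_cons_cons {β : Type*} (a b : β) (l : List β) :
    bigrams (a :: b :: l) = (a, b) ::ₘ bigrams (b :: l) := rfl

lemma bigrams_split {β : Type*} (l1 : List β) (a : β) (l2 : List β) :
    bigrams (l1 ++ a :: l2) = bigrams (l1 ++ [a]) + bigrams (a :: l2) := by
  induction l1 with
  | nil => simp [bigrams]
  | cons b t ih =>
    cases t with
    | nil => simp [bigrams_cons_cons, bigrams]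
    | cons c t' =>
      rw [List.cons_append, List.cons_append, bigrams_cons_cons, ← List.cons_append, ih,
        List.cons_append]
      simp only [List.cons_append, bigrams_cons_cons, Multiset.cons_add]

lemma bigrams_append_last {β : Type*} (l : List β) (h : l ≠ []) (e : β) :
    bigrams (l ++ [e]) = bigrams l + {(l.getLast h, e)} := by
  induction l with
  | nil => exact absurd rfl h
  | cons a t ih =>
    cases t with
    | nil => simp [bigrams, Multiset.cons_zero]
    | cons b t' =>
      have hg : (a :: b :: t').getLast h = (b :: t').getLast (by simp) := by
        rw [List.getLast_cons]
      rw [List.cons_append, List.cons_append, bigrams_cons_cons, ← List.cons_append,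
        ih (by simp), bigrams_cons_cons, hg, Multiset.cons_add]

lemma bigrams_map_fst {β : Type*} (l : List β) :
    (bigrams l).map Prod.fst = (l.dropLast : Multiset β) := by
  induction l with
  | nil => rfl
  | cons a t ih =>
    cases t with
    | nil => rfl
    | cons b t' =>
      rw [bigrams_cons_cons, Multiset.map_cons, ih]
      simp

lemma bigrams_map_snd {β : Type*} (l : List β) :
    (bigrams l).map Prod.snd = (l.tail : Multiset β) := by
  induction l with
  | nil => rfl
  | cons a t ih =>
    cases t with
    | nil => rfl
    | cons b t' =>
      rw [bigrams_cons_cons, Multiset.map_cons, ih]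
      simp

lemma snd_mem_of_mem_bigrams {β : Type*} {l : List β} {z : β × β} (h : z ∈ bigrams l) :
    z.2 ∈ l.tail := by
  have := Multiset.mem_map_of_mem Prod.snd h
  rw [bigrams_map_snd] at this
  exact_mod_cast this

lemma fst_mem_of_mem_bigrams {β : Type*} {l : List β} {z : β × β} (h : z ∈ bigrams l) :
    z.1 ∈ l.dropLast := by
  have := Multiset.mem_map_of_mem Prod.fst h
  rw [bigrams_map_fst] at this
  exact_mod_cast this

lemma bigrams_reverse {β : Type*} (l : List β) :
    bigrams l.reverse = (bigrams l).map Prod.swap := by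
  induction l with
  | nil => rfl
  | cons a t ih =>
    cases t with
    | nil => rfl
    | cons b t' =>
      rw [List.reverse_cons, bigrams_append_last _ (by simp) a, ih, bigrams_cons_cons,
        Multiset.map_cons]
      have hlast : (b :: t').reverse.getLast (by simp) = b := by
        rw [List.getLast_reverse]
        simp
      rw [hlast, add_comm, Multiset.singleton_add, Prod.swap_prod_mk]

lemma Phi_split {α : Type*} (v : List α) (x : α) (v' : List α) :
    Phi (v ++ x :: v') =
      bigrams (none :: v.map some ++ [some x]) +
      bigrams (some x :: (v'.map some ++ [none])) := by
  have h : delim (v ++ x :: v') =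
      (none :: v.map some) ++ some x :: (v'.map some ++ [none]) := by
    simp [delim]
  rw [Phi, h, bigrams_split]

lemma Phi_reverse {α : Type*} (l : List α) :
    Phi l.reverse = (Phi l).map Prod.swap := by
  have h : delim l.reverse = (delim l).reverse := by
    simp [delim]
  rw [Phi, h, bigrams_reverse, Phi]

lemma UD_reverse {α : Type*} {l : List α} (h : UD l) : UD l.reverse := by
  intro z hz
  have h2 : Phi z.reverse = Phi l := by
    have := congrArg (fun m => Multiset.map Prod.swap m) hz
    simpa [← Phi_reverse] using this
  have := h _ h2
  rw [← this, List.reverse_reverse]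

lemma Phi_chars {α : Type*} {w w' : List α} (h : Phi w' = Phi w) :
    (w' : Multiset α) = (w : Multiset α) := by
  have h1 := congrArg (fun m => Multiset.map Prod.fst m) h
  simp only [Phi, bigrams_map_fst] at h1
  have hd : ∀ l : List α, (delim l).dropLast = none :: l.map some := by
    intro l
    rw [show delim l = (none :: l.map some) ++ [none] by simp [delim], List.dropLast_concat]
  rw [hd, hd] at h1
  have h2 : ((w'.map some : List (Option α)) : Multiset (Option α)) = (w.map some : List (Option α)) := by
    have := h1
    simp only [Multiset.coe_eq_coe] at this ⊢
    exact (List.perm_cons none).mp this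
  rw [← Multiset.map_coe, ← Multiset.map_coe] at h2
  exact Multiset.map_injective (Option.some_injective α) h2

lemma filter_split {β : Type*} {M A B : Multiset β} (p : β → Prop) [DecidablePred p]
    (hAB : A + B = M) (hA : ∀ z ∈ A, p z) (hB : ∀ z ∈ B, ¬ p z) : M.filter p = A := by
  subst hAB
  rw [Multiset.filter_add, Multiset.filter_eq_self.mpr hA, Multiset.filter_eq_nil.mpr hB,
    add_zero]

lemma chain_lemma {α : Type*} (x : α) (S : List α) (M : Multiset (Option α × Option α))
    (F : ∀ b, (none, b) ∈ M → b = some x ∨ ∃ c ∈ S, b = some c)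
    (G : ∀ c b, c ∈ S → (some c, b) ∈ M → b = some x ∨ ∃ c' ∈ S, b = some c') :
    ∀ (m : List α) (a : Option α), x ∉ m →
      (a = none ∨ ∃ c ∈ S, a = some c) →
      (∀ z ∈ bigrams (a :: m.map some ++ [some x]), z ∈ M) →
      ∀ c ∈ m, c ∈ S := by
  intro m
  induction m with
  | nil => intro a _ _ _ c hc; cases hc
  | cons d m' ih =>
    intro a hxm ha hsub c hc
    have hre : a :: (d :: m').map some ++ [some x]
        = a :: some d :: (m'.map some ++ [some x]) := by simp
    have hd : (a, some d) ∈ M := by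
      apply hsub
      rw [hre, bigrams_cons_cons]
      exact Multiset.mem_cons_self _ _
    have hdS : d ∈ S := by
      have hstep : some d = some x ∨ ∃ c' ∈ S, some d = some c' := by
        rcases ha with rfl | ⟨c', hc', rfl⟩
        · exact F _ hd
        · exact G _ _ hc' hd
      rcases hstep with hdx | ⟨c', hc', hdc⟩
      · exact absurd (Option.some_inj.mp hdx ▸ (List.mem_cons_self : d ∈ d :: m')) hxm
      · exact (Option.some_inj.mp hdc) ▸ hc'
    rcases List.mem_cons.mp hc with rfl | hc
    · exact hdS
    · exact ih (some d) (fun h => hxm (List.mem_cons_of_mem _ h)) (Or.inr ⟨d, hdS, rfl⟩)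
        (fun z hz => hsub z (by rw [hre, bigrams_cons_cons]; exact Multiset.mem_cons_of_mem hz))
        c hc

lemma dropLast_cons_concat {β : Type*} (e f : β) (L : List β) :
    (e :: (L ++ [f])).dropLast = e :: L := by
  rw [show e :: (L ++ [f]) = (e :: L) ++ [f] from rfl, List.dropLast_concat]

lemma left_eq {α : Type*} (x : α) (v v' u u' : List α)
    (hxv : x ∉ v) (hxv' : x ∉ v')
    (hdisj : ∀ c : α, c ∈ v → c ∉ v')
    (hv : UD v)
    (hxu : x ∉ u) (hxu' : x ∉ u')
    (hPhi : Phi (u ++ x :: u') = Phi (v ++ x :: v')) : u = v := by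
  classical
  have hsplit : bigrams (none :: v.map some ++ [some x])
      + bigrams (some x :: (v'.map some ++ [none])) = Phi (v ++ x :: v') :=
    (Phi_split v x v').symm
  have hsplit' : bigrams (none :: u.map some ++ [some x])
      + bigrams (some x :: (u'.map some ++ [none])) = Phi (v ++ x :: v') := by
    rw [← hPhi]; exact (Phi_split u x u').symm
  -- adjacency facts
  have F : ∀ b, (none, b) ∈ Phi (v ++ x :: v') → b = some x ∨ ∃ c ∈ v, b = some c := by
    intro b hb
    rw [← hsplit] at hb
    rcases Multiset.mem_add.mp hb with h | h
    · have hb2 : b ∈ v.map some ++ [some x] := snd_mem_of_mem_bigrams h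
      rcases List.mem_append.mp hb2 with h2 | h2
      · obtain ⟨c, hc, rfl⟩ := List.mem_map.mp h2
        exact Or.inr ⟨c, hc, rfl⟩
      · exact Or.inl (List.mem_singleton.mp h2)
    · have hb1 := fst_mem_of_mem_bigrams h
      rw [dropLast_cons_concat] at hb1
      rcases List.mem_cons.mp hb1 with h1 | h1
      · exact absurd h1 (by simp)
      · obtain ⟨c, _, hc⟩ := List.mem_map.mp h1
        exact absurd hc (by simp)
  have G : ∀ c b, c ∈ v → (some c, b) ∈ Phi (v ++ x :: v') →
      b = some x ∨ ∃ c' ∈ v, b = some c' := by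
    intro c b hcv hb
    rw [← hsplit] at hb
    rcases Multiset.mem_add.mp hb with h | h
    · have hb2 : b ∈ v.map some ++ [some x] := snd_mem_of_mem_bigrams h
      rcases List.mem_append.mp hb2 with h2 | h2
      · obtain ⟨c', hc', rfl⟩ := List.mem_map.mp h2
        exact Or.inr ⟨c', hc', rfl⟩
      · exact Or.inl (List.mem_singleton.mp h2)
    · have hb1 := fst_mem_of_mem_bigrams h
      rw [dropLast_cons_concat] at hb1
      rcases List.mem_cons.mp hb1 with h1 | h1
      · exact absurd hcv (by simp at h1; rw [h1]; exact hxv)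
      · obtain ⟨c', hc', hc2⟩ := List.mem_map.mp h1
        have : c' = c := Option.some_inj.mp hc2
        exact absurd hc' (this ▸ hdisj c hcv)
  have F' : ∀ b, (none, b) ∈ (Phi (v ++ x :: v')).map Prod.swap →
      b = some x ∨ ∃ c ∈ v', b = some c := by
    intro b hb
    obtain ⟨z, hz, hsw⟩ := Multiset.mem_map.mp hb
    obtain ⟨z1, z2⟩ := z
    obtain ⟨rfl, rfl⟩ : z2 = none ∧ z1 = b := by
      simpa [Prod.ext_iff] using hsw
    rw [← hsplit] at hz
    rcases Multiset.mem_add.mp hz with h | h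
    · have hb2 : (none : Option α) ∈ v.map some ++ [some x] := snd_mem_of_mem_bigrams h
      rcases List.mem_append.mp hb2 with h2 | h2
      · obtain ⟨c, _, hc⟩ := List.mem_map.mp h2
        exact absurd hc (by simp)
      · exact absurd (List.mem_singleton.mp h2) (by simp)
    · have hb1 := fst_mem_of_mem_bigrams h
      rw [dropLast_cons_concat] at hb1
      rcases List.mem_cons.mp hb1 with h1 | h1
      · exact Or.inl h1
      · obtain ⟨c, hc, rfl⟩ := List.mem_map.mp h1
        exact Or.inr ⟨c, hc, rfl⟩
  have G' : ∀ c b, c ∈ v' → (some c, b) ∈ (Phi (v ++ x :: v')).map Prod.swap →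
      b = some x ∨ ∃ c' ∈ v', b = some c' := by
    intro c b hcv hb
    obtain ⟨z, hz, hsw⟩ := Multiset.mem_map.mp hb
    obtain ⟨z1, z2⟩ := z
    obtain ⟨rfl, rfl⟩ : z2 = some c ∧ z1 = b := by
      simpa [Prod.ext_iff] using hsw
    rw [← hsplit] at hz
    rcases Multiset.mem_add.mp hz with h | h
    · have hb2 : (some c : Option α) ∈ v.map some ++ [some x] := snd_mem_of_mem_bigrams h
      rcases List.mem_append.mp hb2 with h2 | h2
      · obtain ⟨c', hc', hc2⟩ := List.mem_map.mp h2
        have : c' = c := Option.some_inj.mp hc2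
        exact absurd hcv (hdisj c (this ▸ hc'))
      · have : c = x := Option.some_inj.mp (List.mem_singleton.mp h2)
        exact absurd (this ▸ hcv) hxv'
    · have hb1 := fst_mem_of_mem_bigrams h
      rw [dropLast_cons_concat] at hb1
      rcases List.mem_cons.mp hb1 with h1 | h1
      · exact Or.inl h1
      · obtain ⟨c', hc', rfl⟩ := List.mem_map.mp h1
        exact Or.inr ⟨c', hc', rfl⟩
  -- chains
  have hu : ∀ c ∈ u, c ∈ v := by
    refine chain_lemma x v _ F G u none hxu (Or.inl rfl) ?_
    intro z hz
    rw [← hsplit']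
    exact Multiset.mem_add.mpr (Or.inl hz)
  have hu' : ∀ c ∈ u', c ∈ v' := by
    intro c hc
    refine chain_lemma x v' _ F' G' u'.reverse none (by simpa using hxu') (Or.inl rfl) ?_
      c (by simpa using hc)
    intro z hz
    have hrev : none :: u'.reverse.map some ++ [some x]
        = (some x :: (u'.map some ++ [none])).reverse := by simp
    rw [hrev, bigrams_reverse] at hz
    obtain ⟨y, hy, rfl⟩ := Multiset.mem_map.mp hz
    refine Multiset.mem_map_of_mem _ ?_
    rw [← hsplit']
    exact Multiset.mem_add.mpr (Or.inr hy)
  -- filter to identify the left halves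
  set p : Option α × Option α → Prop := fun z => z.2 = some x ∨ ∃ c ∈ v, z.2 = some c with hp
  have hnotp : ∀ (m : List α), (∀ c ∈ m, c ∈ v') →
      ∀ z ∈ bigrams (some x :: (m.map some ++ [none])), ¬ p z := by
    intro m hm z hz hpz
    have hb2 : z.2 ∈ m.map some ++ [none] := snd_mem_of_mem_bigrams hz
    rcases List.mem_append.mp hb2 with h2 | h2
    · obtain ⟨d, hd, hd2⟩ := List.mem_map.mp h2
      rcases hpz with h3 | ⟨c, hc, h3⟩
      · rw [← hd2] at h3
        exact hxv' ((Option.some_inj.mp h3) ▸ hm d hd)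
      · rw [← hd2] at h3
        exact hdisj c hc ((Option.some_inj.mp h3) ▸ hm d hd)
    · have : z.2 = none := List.mem_singleton.mp h2
      rcases hpz with h3 | ⟨c, hc, h3⟩ <;> simp [this] at h3
  have hyesp : ∀ (m : List α), (∀ c ∈ m, c ∈ v) →
      ∀ z ∈ bigrams (none :: m.map some ++ [some x]), p z := by
    intro m hm z hz
    have hb2 : z.2 ∈ m.map some ++ [some x] := snd_mem_of_mem_bigrams hz
    rcases List.mem_append.mp hb2 with h2 | h2
    · obtain ⟨d, hd, hd2⟩ := List.mem_map.mp h2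
      exact Or.inr ⟨d, hm d hd, hd2.symm⟩
    · exact Or.inl (List.mem_singleton.mp h2)
  have hLv : (Phi (v ++ x :: v')).filter p = bigrams (none :: v.map some ++ [some x]) :=
    filter_split p hsplit (hyesp v (fun c hc => hc)) (hnotp v' (fun c hc => hc))
  have hLu : (Phi (v ++ x :: v')).filter p = bigrams (none :: u.map some ++ [some x]) :=
    filter_split p hsplit' (hyesp u hu) (hnotp u' hu')
  have hL : bigrams ((none :: u.map some) ++ [some x])
      = bigrams ((none :: v.map some) ++ [some x]) := hLu.symm.trans hLv
  rw [bigrams_append_last (none :: u.map some) (by simp) (some x),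
    bigrams_append_last (none :: v.map some) (by simp) (some x)] at hL
  -- separate the last bigram
  set q : Option α × Option α → Prop := fun z => z.2 = some x with hq
  have hnotq : ∀ (m : List α), x ∉ m → ∀ z ∈ bigrams (none :: m.map some), ¬ q z := by
    intro m hxm z hz hqz
    have hb2 : z.2 ∈ m.map some := snd_mem_of_mem_bigrams hz
    obtain ⟨d, hd, hd2⟩ := List.mem_map.mp hb2
    have hqz' : z.2 = some x := hqz
    rw [← hd2] at hqz'
    exact hxm ((Option.some_inj.mp hqz') ▸ hd)
  have hfq : ∀ (m : List α) (g : Option α × Option α), x ∉ m →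
      (bigrams (none :: m.map some) + {g}).filter q = {g} → True := fun _ _ _ _ => trivial
  have hqu : (bigrams (none :: u.map some)
      + {((none :: u.map some).getLast (by simp), some x)}).filter q
      = {((none :: u.map some).getLast (by simp), some x)} :=
    filter_split q (add_comm _ _) (by intro z hz; rw [Multiset.mem_singleton.mp hz])
      (hnotq u hxu)
  have hqv : (bigrams (none :: v.map some)
      + {((none :: v.map some).getLast (by simp), some x)}).filter q
      = {((none :: v.map some).getLast (by simp), some x)} :=
    filter_split q (add_comm _ _) (by intro z hz; rw [Multiset.mem_singleton.mp hz])
      (hnotq v hxv)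
  have hgsing : ({((none :: u.map some).getLast (by simp), some x)} :
      Multiset (Option α × Option α))
      = {((none :: v.map some).getLast (by simp), some x)} := by
    rw [← hqu, ← hqv, hL]
  have hg : (none :: u.map some).getLast (by simp)
      = (none :: v.map some).getLast (by simp) := by
    have := Multiset.singleton_inj.mp hgsing
    exact (Prod.ext_iff.mp this).1
  have hquN : (bigrams (none :: u.map some)
      + {((none :: u.map some).getLast (by simp), some x)}).filter (fun z => ¬ q z)
      = bigrams (none :: u.map some) :=
    filter_split _ rfl (fun z hz => hnotq u hxu z hz)
      (by intro z hz h2; exact h2 (by rw [Multiset.mem_singleton.mp hz]))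
  have hqvN : (bigrams (none :: v.map some)
      + {((none :: v.map some).getLast (by simp), some x)}).filter (fun z => ¬ q z)
      = bigrams (none :: v.map some) :=
    filter_split _ rfl (fun z hz => hnotq v hxv z hz)
      (by intro z hz h2; exact h2 (by rw [Multiset.mem_singleton.mp hz]))
  have hN : bigrams (none :: u.map some) = bigrams (none :: v.map some) := by
    rw [← hquN, ← hqvN, hL]
  -- reassemble Phi u = Phi v
  have hPu : Phi u = bigrams (none :: u.map some)
      + {((none :: u.map some).getLast (by simp), none)} := by
    rw [Phi, show delim u = (none :: u.map some) ++ [none] from by simp [delim],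
      bigrams_append_last (none :: u.map some) (by simp) none]
  have hPv : Phi v = bigrams (none :: v.map some)
      + {((none :: v.map some).getLast (by simp), none)} := by
    rw [Phi, show delim v = (none :: v.map some) ++ [none] from by simp [delim],
      bigrams_append_last (none :: v.map some) (by simp) none]
  exact hv u (by rw [hPu, hPv, hN, hg])

theorem UD_of_split_at_unique_char {α : Type*} [Fintype α] (x : α) (v v' : List α)
    (hxv : x ∉ v) (hxv' : x ∉ v')
    (hdisj : ∀ c : α, c ∈ v → c ∉ v')
    (hv : UD v) (hv' : UD v') :
    UD (v ++ x :: v') := by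
  classical
  intro w' hPhi
  have hchar := Phi_chars hPhi
  have hxw : x ∈ w' := by
    have : x ∈ (w' : Multiset α) := by
      rw [hchar]; simp
    simpa using this
  obtain ⟨u, u', rfl⟩ := List.append_of_mem hxw
  have hcount : (u ++ x :: u').count x = (v ++ x :: v').count x := by
    have h := congrArg (Multiset.count x) hchar
    simpa using h
  have hcv : (v ++ x :: v').count x = 1 := by
    simp [List.count_append, List.count_cons, List.count_eq_zero.mpr hxv,
      List.count_eq_zero.mpr hxv']
  have hcu : u.count x + (u'.count x + 1) = 1 := by
    have := hcount.trans hcv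
    simpa [List.count_append, List.count_cons] using this
  have hxu : x ∉ u := List.count_eq_zero.mp (by omega)
  have hxu' : x ∉ u' := List.count_eq_zero.mp (by omega)
  have h1 : u = v := left_eq x v v' u u' hxv hxv' hdisj hv hxu hxu' hPhi
  have hPhirev : Phi (u'.reverse ++ x :: u.reverse) = Phi (v'.reverse ++ x :: v.reverse) := by
    have e1 : (u ++ x :: u').reverse = u'.reverse ++ x :: u.reverse := by simp
    have e2 : (v ++ x :: v').reverse = v'.reverse ++ x :: v.reverse := by simp
    rw [← e1, ← e2, Phi_reverse, Phi_reverse, hPhi]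
  have h2 : u'.reverse = v'.reverse := by
    refine left_eq x v'.reverse v.reverse u'.reverse u.reverse (by simpa using hxv')
      (by simpa using hxv) ?_ (UD_reverse hv') (by simpa using hxu') (by simpa using hxu)
      hPhirev
    intro c hc hcv2
    exact hdisj c (by simpa using hcv2) (by simpa using hc)
  rw [h1, List.reverse_injective h2]
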